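/- Let V be a module over the twisted N=1 Schrödinger-Neveu-Schwarz algebra and let v ∈ V satisfy G_{1/2}v = Y_{1/2}v = M_{1/2}v = 0. Then Y_p v = 0 and M_p v = 0 for all p ∈ (1/2)ℤ with p > 0. -/

import Mathlib

noncomputable section

/-- Basis of the twisted N=1 Schrodinger-Neveu-Schwarz algebra.
`L n` is L_n, `G k` is G_{k+1/2}, `Y p` is Y_{p/2}, `M p` is M_{p/2}, `C` is the central element. -/
inductive B : Type
  | L : ℤ → B
  | G : ℤ → B
  | Y : ℤ → B
  | M : ℤ → B
  | C : B
deriving DecidableEq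

/-- The underlying vector space of tsns. -/
abbrev V := B →₀ ℂ

/-- Basis vectors. -/
def e (x : B) : V := Finsupp.single x 1

/-- Parity of a basis element. -/
def isOdd : B → Bool
  | .G _ => true
  | .Y p => if p % 2 = 0 then false else true
  | .M p => if p % 2 = 0 then false else true
  | _ => false

/-- The Koszul sign (-1)^{|x||y|}. -/
def sgn (x y : B) : ℂ := if isOdd x && isOdd y then -1 else 1

/-- The super-bracket on basis elements of tsns. -/
def bb : B → B → V
  | .L n, .L m => ((m : ℂ) - n) • e (.L (n+m)) +
      (if m = -n then (((n:ℂ)^3 - (n:ℂ))/12) • e B.C else 0)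
  | .L n, .G k => ((k : ℂ) + 1/2 - (n:ℂ)/2) • e (.G (k+n))
  | .G k, .L n => (-((k : ℂ) + 1/2 - (n:ℂ)/2)) • e (.G (k+n))
  | .G k, .G l => (2:ℂ) • e (.L (k+l+1)) +
      (if l = -k-1 then ((1 - 4*((k:ℂ)+1/2)^2)/12) • e B.C else 0)
  | .L n, .Y p => (if p % 2 = 0 then (p:ℂ)/2 - (n:ℂ)/2 else (p:ℂ)/2) • e (.Y (p + 2*n))
  | .Y p, .L n => (-(if p % 2 = 0 then (p:ℂ)/2 - (n:ℂ)/2 else (p:ℂ)/2)) • e (.Y (p + 2*n))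
  | .L n, .M p => (if p % 2 = 0 then (p:ℂ)/2 else (p:ℂ)/2 + (n:ℂ)/2) • e (.M (p + 2*n))
  | .M p, .L n => (-(if p % 2 = 0 then (p:ℂ)/2 else (p:ℂ)/2 + (n:ℂ)/2)) • e (.M (p + 2*n))
  | .G k, .Y p => (if p % 2 = 0 then ((p:ℂ)/2 - ((k:ℂ)+1/2))/2 else 2) • e (.Y (p + 2*k + 1))
  | .Y p, .G k => (if p % 2 = 0 then -(((p:ℂ)/2 - ((k:ℂ)+1/2))/2) else 2) • e (.Y (p + 2*k + 1))
  | .G k, .M p => (if p % 2 = 0 then (p:ℂ)/4 else 2) • e (.M (p + 2*k + 1))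
  | .M p, .G k => (if p % 2 = 0 then -((p:ℂ)/4) else 2) • e (.M (p + 2*k + 1))
  | .Y p, .Y q => (if p % 2 = 0 then (if q % 2 = 0 then ((q:ℂ) - p)/4 else (q:ℂ)/4)
      else (if q % 2 = 0 then -((p:ℂ)/4) else 2)) • e (.M (p + q))
  | _, _ => 0

/-- Bilinear extension of the bracket to all of tsns. -/
def br (f g : V) : V := f.sum fun x a => g.sum fun y b => (a * b) • bb x y

/-- Linear extension of an assignment of operators to basis elements. -/
def ext {W : Type} [AddCommGroup W] [Module ℂ W] (ρ : B → Module.End ℂ W) (f : V) :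
    Module.End ℂ W := f.sum fun x a => a • ρ x

/-- A module (representation) over the twisted N=1 Schrodinger-Neveu-Schwarz algebra. -/
structure TsnsRep (W : Type) [AddCommGroup W] [Module ℂ W] where
  ρ : B → Module.End ℂ W
  compat : ∀ x y : B, ext ρ (bb x y) = ρ x * ρ y - sgn x y • (ρ y * ρ x)

/-- Simplicity (irreducibility) of a tsns-module. -/
def TsnsSimple {W : Type} [AddCommGroup W] [Module ℂ W] (r : TsnsRep W) : Prop :=
  (∃ w : W, w ≠ 0) ∧
    ∀ U : Submodule ℂ W, (∀ x : B, ∀ u ∈ U, r.ρ x u ∈ U) → U = ⊥ ∨ U = ⊤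


lemma ext_smul_e {W : Type} [AddCommGroup W] [Module ℂ W] (ρ : B → Module.End ℂ W)
    (c : ℂ) (z : B) : ext ρ (c • e z) = c • ρ z := by
  rw [show c • e z = Finsupp.single z c from by simp [e]]
  exact Finsupp.sum_single_index (zero_smul ℂ _)

/-- if G_{1/2}v = Y_{1/2}v = M_{1/2}v = 0 then Y_p v = M_p v = 0 for all
p ∈ (1/2)ℤ with p > 0. (Here `.Y p` denotes Y_{p/2}, `.G 0` denotes G_{1/2}.) -/
theorem positive_YM_kill {W : Type} [AddCommGroup W] [Module ℂ W] (r : TsnsRep W)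
    (v : W) (hG : r.ρ (.G 0) v = 0) (hY : r.ρ (.Y 1) v = 0) (hM : r.ρ (.M 1) v = 0) :
    ∀ p : ℤ, 0 < p → r.ρ (.Y p) v = 0 ∧ r.ρ (.M p) v = 0 := by
  have key : ∀ (x z : B) (c : ℂ), bb (.G 0) x = c • e z → c ≠ 0 → r.ρ x v = 0 →
      r.ρ z v = 0 := by
    intro x z c hbb hc hx
    have h := congrArg (fun f => f v) (r.compat (.G 0) x)
    simp only [hbb, ext_smul_e, LinearMap.sub_apply, Module.End.mul_apply,
      LinearMap.smul_apply, hx, hG, map_zero, smul_zero, sub_zero] at h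
    exact (smul_eq_zero.mp h).resolve_left hc
  have hYall : ∀ p : ℤ, 1 ≤ p → r.ρ (.Y p) v = 0 := by
    refine fun p hp => Int.le_induction (motive := fun q _ => r.ρ (.Y q) v = 0) ?_ ?_ p hp
    · exact hY
    · intro p hp ih
      rcases Int.emod_two_eq_zero_or_one p with h2 | h2
      · have hp1 : p ≠ 1 := by omega
        have hc1 : (p : ℂ) ≠ 1 := by exact_mod_cast fun h => hp1 (by exact_mod_cast h)
        have := key (.Y p) (.Y (p + 2*0 + 1)) (((p:ℂ)/2 - ((0:ℂ)+1/2))/2)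
          (by simp [bb, h2]) (by
            apply div_ne_zero _ (by norm_num : (2:ℂ) ≠ 0)
            intro h
            field_simp at h
            exact hc1 (by linear_combination h)) ih
        simpa using this
      · have := key (.Y p) (.Y (p + 2*0 + 1)) 2 (by simp [bb, h2]) two_ne_zero ih
        simpa using this
  have hMall : ∀ p : ℤ, 1 ≤ p → r.ρ (.M p) v = 0 := by
    refine fun p hp => Int.le_induction (motive := fun q _ => r.ρ (.M q) v = 0) ?_ ?_ p hp
    · exact hM
    · intro p hp ih
      rcases Int.emod_two_eq_zero_or_one p with h2 | h2
      · have hp0 : p ≠ 0 := by omega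
        have hc0 : (p : ℂ) ≠ 0 := by exact_mod_cast hp0
        have := key (.M p) (.M (p + 2*0 + 1)) ((p:ℂ)/4)
          (by simp [bb, h2]) (div_ne_zero hc0 (by norm_num)) ih
        simpa using this
      · have := key (.M p) (.M (p + 2*0 + 1)) 2 (by simp [bb, h2]) two_ne_zero ih
        simpa using this
  intro p hp
  exact ⟨hYall p (by omega), hMall p (by omega)⟩
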